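/- In a loop satisfying identity C14, e/x = x/(x·x) for every x; equivalently, (e/x)·(x·x) = x. -/
import Mathlib

/-- A loop: a set with multiplication, left division `ldiv` (written `\`),
right division `rdiv` (written `/`), and a two-sided identity `e`. -/
structure Loop (α : Type) where
  mul : α → α → α
  ldiv : α → α → α
  rdiv : α → α → α
  e : α
  mul_ldiv : ∀ a b, mul a (ldiv a b) = b
  rdiv_mul : ∀ a b, mul (rdiv b a) a = b
  ldiv_mul : ∀ a b, ldiv a (mul a b) = b
  mul_rdiv : ∀ a b, rdiv (mul b a) a = b
  e_mul : ∀ a, mul e a = a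
  mul_e : ∀ a, mul a e = a

theorem stmt_11 (α : Type) (L : Loop α) (h : ∀ x y z : α, L.mul x (L.mul y (L.mul y z)) = L.mul (L.mul x (L.mul y y)) z) :
    ∀ x : α, L.rdiv L.e x = L.rdiv x (L.mul x x) ∧ L.mul (L.rdiv L.e x) (L.mul x x) = x := by
  intro x
  set u := L.rdiv L.e x with hu
  set z := L.ldiv x L.e with hz
  have hxz : L.mul x z = L.e := L.mul_ldiv x L.e
  have hkey : L.mul u (L.mul x (L.mul x z)) = L.mul (L.mul u (L.mul x x)) z := h u x z
  have hlhs : L.mul u (L.mul x (L.mul x z)) = L.mul x z := by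
    rw [hxz, L.mul_e, L.rdiv_mul, ← hxz]
  have h2 : L.mul (L.mul u (L.mul x x)) z = L.mul x z := by rw [← hkey, hlhs]
  have hmain : L.mul u (L.mul x x) = x := by
    have := congrArg (fun w => L.rdiv w z) h2
    simpa [L.mul_rdiv] using this
  refine ⟨?_, hmain⟩
  have : L.rdiv (L.mul u (L.mul x x)) (L.mul x x) = u := L.mul_rdiv (L.mul x x) u
  rw [hmain] at this
  exact this.symm
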